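/- Let f : X → Y be a continuous map between finite topological spaces. The following are equivalent: (1) f is universally open, i.e. for every finite topological space Ȳ and continuous map g : Ȳ → Y, the projection Ȳ ×_Y X → Ȳ is an open map, where Ȳ ×_Y X = {(ȳ,x) : g(ȳ) = f(x)} carries the subspace topology of the product; (2) f is an open map; (3) for every x ∈ X, the restriction f|_{U_x} : U_x → U_{f(x)} is surjective. -/
import Mathlib


section spacesmin
variable {X : Type} [TopologicalSpace X]

/-- The minimal open subset containing a point (of a finite space). -/
def minOpen (x : X) : Set X := ⋂₀ {U : Set X | IsOpen U ∧ x ∈ U}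
end spacesmin

lemma mem_minOpen_self {X : Type} [TopologicalSpace X] (x : X) : x ∈ minOpen x :=
  fun _ hU => hU.2

lemma minOpen_subset {X : Type} [TopologicalSpace X] {x : X} {U : Set X} (hU : IsOpen U)
    (hx : x ∈ U) : minOpen x ⊆ U :=
  Set.sInter_subset_of_mem ⟨hU, hx⟩

lemma isOpen_minOpen {X : Type} [TopologicalSpace X] [Finite X] (x : X) :
    IsOpen (minOpen x) :=
  isOpen_sInter (fun _ hU => hU.1)

lemma image_minOpen_subset {X Y : Type} [TopologicalSpace X] [TopologicalSpace Y] [Finite Y]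
    {g : X → Y} (hg : Continuous g) (x : X) : g '' minOpen x ⊆ minOpen (g x) := by
  rw [Set.image_subset_iff]
  exact minOpen_subset ((isOpen_minOpen (g x)).preimage hg) (mem_minOpen_self (g x))

lemma isOpen_of_minOpen {X : Type} [TopologicalSpace X] [Finite X] {U : Set X}
    (h : ∀ x ∈ U, minOpen x ⊆ U) : IsOpen U := by
  have : U = ⋃ x ∈ U, minOpen x := by
    apply Set.Subset.antisymm
    · intro x hx
      exact Set.mem_biUnion hx (mem_minOpen_self x)
    · exact Set.iUnion₂_subset h
  rw [this]
  exact isOpen_biUnion fun x _ => isOpen_minOpen x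

/-- **Statement 7.** For a continuous map `f : X → Y` of finite topological spaces, the
following are equivalent: (1) `f` is universally open; (2) `f` is open; (3) for every
`x ∈ X`, the restriction `f|_{U_x} : U_x → U_{f(x)}` is surjective. -/
theorem statement7 {X Y : Type} [TopologicalSpace X] [TopologicalSpace Y] [Finite X] [Finite Y]
    (f : X → Y) (hf : Continuous f) :
    List.TFAE [
      -- (1) universally open
      ∀ (Z : Type) [TopologicalSpace Z] [Finite Z] (g : Z → Y), Continuous g →
        IsOpenMap (fun q : {q : Z × X // g q.1 = f q.2} => q.1.1),
      -- (2) open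
      IsOpenMap f,
      -- (3) surjective on minimal open subsets
      ∀ x : X, Set.SurjOn f (minOpen x) (minOpen (f x))] := by
  tfae_have 1 → 2 := by
    intro h1
    have hπ := h1 Y id continuous_id
    intro U hU
    have hW : IsOpen (Subtype.val ⁻¹' ((Set.univ : Set Y) ×ˢ U) :
        Set {q : Y × X // id q.1 = f q.2}) :=
      (isOpen_univ.prod hU).preimage continuous_subtype_val
    have := hπ _ hW
    convert this using 1
    ext y
    constructor
    · rintro ⟨x, hx, rfl⟩
      exact ⟨⟨(f x, x), rfl⟩, ⟨trivial, hx⟩, rfl⟩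
    · rintro ⟨⟨⟨y', x⟩, hq⟩, ⟨-, hx⟩, rfl⟩
      exact ⟨x, hx, hq.symm⟩
  tfae_have 2 → 3 := by
    intro h2 x
    have hopen : IsOpen (f '' minOpen x) := h2 _ (isOpen_minOpen x)
    have hmem : f x ∈ f '' minOpen x := ⟨x, mem_minOpen_self x, rfl⟩
    exact fun y hy => minOpen_subset hopen hmem hy
  tfae_have 3 → 1 := by
    intro h3 Z _ _ g hg
    intro V hV
    apply isOpen_of_minOpen
    rintro z ⟨⟨⟨z₀, x₀⟩, hq⟩, hqV, rfl⟩
    intro z' hz'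
    -- g z' ∈ minOpen (f x₀)
    have hgz' : g z' ∈ minOpen (f x₀) := by
      rw [← hq]
      exact image_minOpen_subset hg z₀ ⟨z', hz', rfl⟩
    obtain ⟨x', hx', hfx'⟩ := h3 x₀ hgz'
    refine ⟨⟨(z', x'), hfx'.symm⟩, ?_, rfl⟩
    -- show this point is in V
    obtain ⟨O, hO, rfl⟩ := isOpen_induced_iff.mp hV
    have hOmem : ((z₀, x₀) : Z × X) ∈ O := hqV
    -- find a basic open box inside O
    obtain ⟨U₁, U₂, hU₁, hU₂, hz₀, hx₀, hbox⟩ :=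
      isOpen_prod_iff.mp hO z₀ x₀ hOmem
    exact hbox ⟨minOpen_subset hU₁ hz₀ hz', minOpen_subset hU₂ hx₀ hx'⟩
  tfae_finish
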